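/- Let p be a prime, let Π = (p, p, …) be the constant sequence, and let G be a torsion Π-graded group. Then every subgroup H of G of finite index contains δ_n^Π(G) for some n. -/

import Mathlib

/-- The derived `Π`-series of a group, where `p i` denotes the prime `p_{i+1}` of the
sequence `Π = (p_1, p_2, …)`:  `δ_0^Π(G) = G` and
`δ_{i+1}^Π(G) = [δ_i^Π(G), δ_i^Π(G)] · (δ_i^Π(G))^{p_{i+1}}`, the subgroup generated by
all commutators and all `p_{i+1}`-th powers of elements of `δ_i^Π(G)`. -/
def piDelta {G : Type*} [Group G] (p : ℕ → ℕ) : ℕ → Subgroup G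
  | 0 => ⊤
  | i + 1 =>
      ⁅(piDelta p i : Subgroup G), (piDelta p i : Subgroup G)⁆ ⊔
        Subgroup.closure {x : G | ∃ a ∈ (piDelta p i : Subgroup G), a ^ p i = x}

lemma piDelta_succ_le {G : Type*} [Group G] (p : ℕ → ℕ) (n : ℕ) :
    (piDelta p (n + 1) : Subgroup G) ≤ piDelta p n := by
  rw [piDelta]
  refine sup_le (Subgroup.commutator_le.2 fun a ha b hb => ?_)
    ((Subgroup.closure_le _).2 ?_)
  · rw [commutatorElement_def]
    exact (piDelta p n).mul_mem ((piDelta p n).mul_mem ((piDelta p n).mul_mem ha hb)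
      ((piDelta p n).inv_mem ha)) ((piDelta p n).inv_mem hb)
  · rintro x ⟨a, ha, rfl⟩
    exact (piDelta p n).pow_mem ha _

lemma map_piDelta {G Q : Type*} [Group G] [Group Q] (f : G →* Q) (p : ℕ → ℕ) (n : ℕ) :
    (piDelta p n : Subgroup G).map f ≤ (piDelta p n : Subgroup Q) := by
  induction n with
  | zero => exact le_top
  | succ n ih =>
      rw [piDelta, piDelta, Subgroup.map_sup, Subgroup.map_commutator, MonoidHom.map_closure]
      refine sup_le_sup (Subgroup.commutator_mono ih ih) (Subgroup.closure_mono ?_)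
      rintro y ⟨x, ⟨a, ha, rfl⟩, rfl⟩
      exact ⟨f a, ih ⟨a, ha, rfl⟩, (map_pow f a (p n)).symm⟩

lemma stepA {K : Type*} [Group K] [Finite K] {q : ℕ} (hq : q.Prime)
    (hp : IsPGroup q K) (hnt : Nontrivial K) :
    (⁅(⊤ : Subgroup K), (⊤ : Subgroup K)⁆ ⊔
      Subgroup.closure {x : K | ∃ a ∈ (⊤ : Subgroup K), a ^ q = x}) ≠ ⊤ := by
  haveI : Fact q.Prime := ⟨hq⟩
  haveI : Group.IsNilpotent K := hp.isNilpotent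
  -- commutator is proper
  have hcomm : commutator K ≠ ⊤ := by
    intro h
    have hds : ∀ m : ℕ, derivedSeries K (m + 1) = ⊤ := by
      intro m
      induction m with
      | zero => rw [derivedSeries_succ, derivedSeries_zero]; exact h
      | succ m ih => rw [derivedSeries_succ, ih]; exact h
    obtain ⟨m, hm⟩ := (inferInstance : Group.IsSolvable K).solvable
    cases m with
    | zero => exact (bot_ne_top (α := Subgroup K)).symm (by rw [← hm, derivedSeries_zero])
    | succ m => exact (bot_ne_top (α := Subgroup K)).symm (by rw [← hm, hds])
  -- Abelianization is nontrivial
  obtain ⟨k, hk⟩ : ∃ k : K, k ∉ commutator K := by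
    by_contra hc
    push_neg at hc
    exact hcomm ((Subgroup.eq_top_iff' _).2 hc)
  have hknt : Abelianization.of k ≠ 1 := by
    intro h1
    exact hk ((QuotientGroup.eq_one_iff k).1 h1)
  haveI hA : Nontrivial (Abelianization K) := ⟨Abelianization.of k, 1, hknt⟩
  -- the q-power map on the abelianization is not surjective
  have hofsurj : Function.Surjective (Abelianization.of (G := K)) := fun x =>
    Quotient.inductionOn' x fun g => ⟨g, rfl⟩
  have hpA : IsPGroup q (Abelianization K) := hp.of_surjective Abelianization.of hofsurj
  set ψ : Abelianization K →* Abelianization K := powMonoidHom q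
  obtain ⟨m, hm0, hcard⟩ := hpA.nontrivial_iff_card.1 hA
  have hdvd : q ∣ Nat.card (Abelianization K) := by
    rw [hcard]; exact dvd_pow_self q hm0.ne'
  haveI := Fintype.ofFinite (Abelianization K)
  obtain ⟨a, ha⟩ := exists_prime_orderOf_dvd_card (G := Abelianization K) q
    (by rwa [← Nat.card_eq_fintype_card])
  have haker : ψ a = 1 := by
    simpa [ψ, powMonoidHom_apply, ← ha] using pow_orderOf_eq_one a
  have hane : a ≠ 1 := by
    intro h; rw [h, orderOf_one] at ha; exact hq.one_lt.ne' ha.symm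
  have hnotinj : ¬ Function.Injective ψ := by
    intro hinj
    exact hane (hinj (by rw [haker, map_one]))
  have hnotsurj : ¬ Function.Surjective ψ := by
    intro hsurj
    exact hnotinj ((Finite.injective_iff_surjective).2 hsurj)
  obtain ⟨c, hc⟩ := not_forall.1 hnotsurj
  -- conclude
  intro htop
  apply hc
  have hle : (⁅(⊤ : Subgroup K), (⊤ : Subgroup K)⁆ ⊔
      Subgroup.closure {x : K | ∃ a ∈ (⊤ : Subgroup K), a ^ q = x}) ≤
      Subgroup.comap Abelianization.of ψ.range := by
    refine sup_le ?_ ?_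
    · intro x hx
      have : x ∈ commutator K := by rwa [commutator_def]
      have hker : Abelianization.of x = 1 :=
        (QuotientGroup.eq_one_iff x).2 this
      rw [Subgroup.mem_comap, hker]
      exact ⟨1, map_one ψ⟩
    · rw [Subgroup.closure_le]
      rintro x ⟨a, -, rfl⟩
      exact ⟨Abelianization.of a, by simp [ψ, powMonoidHom_apply, map_pow]⟩
  obtain ⟨x, rfl⟩ := hofsurj c
  have := hle (htop ▸ Subgroup.mem_top x)
  exact this

lemma stepB {Q : Type*} [Group Q] [Finite Q] {q : ℕ} (hq : q.Prime) (hp : IsPGroup q Q)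
    (K : Subgroup Q) (hK : K ≠ ⊥) :
    (⁅K, K⁆ ⊔ Subgroup.closure {x : Q | ∃ a ∈ K, a ^ q = x}) < K := by
  have hle : (⁅K, K⁆ ⊔ Subgroup.closure {x : Q | ∃ a ∈ K, a ^ q = x}) ≤ K := by
    refine sup_le (Subgroup.commutator_le.2 fun a ha b hb => ?_)
      ((Subgroup.closure_le _).2 ?_)
    · rw [commutatorElement_def]
      exact K.mul_mem (K.mul_mem (K.mul_mem ha hb) (K.inv_mem ha)) (K.inv_mem hb)
    · rintro x ⟨a, ha, rfl⟩; exact K.pow_mem ha q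
  refine lt_of_le_of_ne hle fun heq => ?_
  -- transfer to the subgroup as a group
  have himg : (⁅K, K⁆ ⊔ Subgroup.closure {x : Q | ∃ a ∈ K, a ^ q = x}) =
      Subgroup.map K.subtype (⁅(⊤ : Subgroup K), (⊤ : Subgroup K)⁆ ⊔
        Subgroup.closure {x : K | ∃ a ∈ (⊤ : Subgroup K), a ^ q = x}) := by
    rw [Subgroup.map_sup, Subgroup.map_commutator, MonoidHom.map_closure,
      ← MonoidHom.range_eq_map, Subgroup.range_subtype]
    congr 1
    congr 1
    ext x
    constructor
    · rintro ⟨a, ha, rfl⟩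
      exact ⟨(⟨a, ha⟩ : K) ^ q, ⟨⟨a, ha⟩, Subgroup.mem_top _, rfl⟩, rfl⟩
    · rintro ⟨y, ⟨a, -, rfl⟩, rfl⟩
      exact ⟨(a : Q), a.2, rfl⟩
  have heq2 : Subgroup.map K.subtype (⁅(⊤ : Subgroup K), (⊤ : Subgroup K)⁆ ⊔
      Subgroup.closure {x : K | ∃ a ∈ (⊤ : Subgroup K), a ^ q = x}) =
      Subgroup.map K.subtype ⊤ := by
    rw [← himg, heq, ← MonoidHom.range_eq_map, Subgroup.range_subtype]
  have heq3 := Subgroup.map_injective K.subtype_injective heq2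
  haveI : Nontrivial K := (Subgroup.nontrivial_iff_ne_bot K).2 hK
  exact stepA hq (hp.to_subgroup K) inferInstance heq3

lemma piDelta_eq_bot_of_finite {Q : Type*} [Group Q] [Finite Q] {q : ℕ} (hq : q.Prime)
    (hp : IsPGroup q Q) : ∃ n : ℕ, (piDelta (fun _ => q) n : Subgroup Q) = ⊥ := by
  by_contra hc
  push_neg at hc
  set p' : ℕ → ℕ := fun _ => q with hp'
  have hdec : ∀ n : ℕ, Nat.card (piDelta p' (n + 1) : Subgroup Q) <
      Nat.card (piDelta p' n : Subgroup Q) := by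
    intro n
    have hlt : (piDelta p' (n + 1) : Subgroup Q) < piDelta p' n := by
      have := stepB hq hp (piDelta p' n) (hc n)
      rw [piDelta]
      exact this
    have hss : ((piDelta p' (n + 1) : Subgroup Q) : Set Q) ⊂ (piDelta p' n : Subgroup Q) := by
      exact_mod_cast hlt
    have := Set.ncard_lt_ncard hss (Set.toFinite _)
    rw [← Nat.card_coe_set_eq, ← Nat.card_coe_set_eq] at this; exact this
  have hbound : ∀ n : ℕ, Nat.card (piDelta p' n : Subgroup Q) + n ≤
      Nat.card (piDelta p' 0 : Subgroup Q) := by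
    intro n
    induction n with
    | zero => simp
    | succ n ih => have := hdec n; omega
  have := hbound (Nat.card (piDelta p' 0 : Subgroup Q) + 1)
  omega

/-- **Lemma 2.6.** If `Π = (p, p, …)` is a constant sequence of primes and `G` is a
torsion `Π`-graded group, then every finite-index subgroup of `G` contains some
`δ_n^Π(G)`. -/
theorem piDelta_le_of_finiteIndex_constant_prime
    {G : Type*} [Group G] (q : ℕ) (hq : q.Prime)
    (htor : ∀ g : G, IsOfFinOrder g)
    (hgraded : (⨅ i : ℕ, (piDelta (fun _ => q) (i + 1) : Subgroup G)) = ⊥)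
    (H : Subgroup G) (hH : H.FiniteIndex) :
    ∃ n : ℕ, (piDelta (fun _ => q) n : Subgroup G) ≤ H := by
  classical
  set p' : ℕ → ℕ := fun _ => q with hp'
  -- Step 1: G is a q-group
  have hpG : IsPGroup q G := by
    intro g
    have hm0 : orderOf g ≠ 0 := (htor g).orderOf_pos.ne'
    set m := orderOf g with hm
    set k := m.factorization q with hk
    refine ⟨k, ?_⟩
    set x := g ^ (q ^ k) with hx
    set r := m / q ^ k with hr
    have hqk_dvd : q ^ k ∣ m := Nat.ordProj_dvd m q
    have hco : Nat.Coprime q r := Nat.coprime_ordCompl hq hm0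
    have hr0 : r ≠ 0 := (Nat.ordCompl_pos q hm0).ne'
    have hordx : orderOf x = r := by
      rw [hx, orderOf_pow' _ (pow_ne_zero k hq.pos.ne'), ← hm, Nat.gcd_eq_right hqk_dvd]
    -- x lies in every piDelta
    have hxin : ∀ n : ℕ, x ∈ (piDelta p' n : Subgroup G) := by
      intro n
      induction n with
      | zero => exact Subgroup.mem_top x
      | succ n ih =>
          rw [piDelta]
          refine Subgroup.mem_sup_right (Subgroup.subset_closure ?_)
          refine ⟨x ^ (q ^ (r.totient - 1)), (piDelta p' n).pow_mem ih _, ?_⟩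
          rw [← pow_mul, ← pow_succ]
          have ht1 : r.totient - 1 + 1 = r.totient :=
            Nat.succ_pred_eq_of_pos (Nat.totient_pos.2 (Nat.pos_of_ne_zero hr0))
          rw [ht1]
          have : q ^ r.totient ≡ 1 [MOD r] := Nat.ModEq.pow_totient hco
          calc x ^ q ^ r.totient = x ^ 1 := by
                rw [pow_eq_pow_iff_modEq, hordx]; exact this
            _ = x := pow_one x
    have hxbot : x ∈ (⊥ : Subgroup G) := by
      rw [← hgraded]
      exact Subgroup.mem_iInf.2 fun i => hxin (i + 1)
    simpa [hx] using hxbot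
  -- Step 2: pass to the quotient by the normal core
  set N := H.normalCore with hN
  haveI : N.Normal := H.normalCore_normal
  haveI : N.FiniteIndex := Subgroup.finiteIndex_normalCore H
  haveI : Finite (G ⧸ N) := Subgroup.finite_quotient_of_finiteIndex
  have hpQ : IsPGroup q (G ⧸ N) := hpG.to_quotient N
  obtain ⟨n, hn⟩ := piDelta_eq_bot_of_finite hq hpQ
  refine ⟨n, ?_⟩
  have hmap : (piDelta p' n : Subgroup G).map (QuotientGroup.mk' N) ≤
      (piDelta p' n : Subgroup (G ⧸ N)) := map_piDelta _ p' n
  rw [hn] at hmap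
  intro g hg
  have : (QuotientGroup.mk' N) g ∈ (⊥ : Subgroup (G ⧸ N)) := hmap ⟨g, hg, rfl⟩
  have hgN : g ∈ N := by
    rwa [Subgroup.mem_bot, ← MonoidHom.mem_ker, QuotientGroup.ker_mk'] at this
  exact H.normalCore_le hgN
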